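/- Let D be a real graded division algebra (grading group G abelian) with support T, identity component D_e, and fixed nonzero elements X_t ∈ D_t for each t ∈ T. Then the group of automorphisms of D as a graded algebra that act as the identity on D_e is isomorphic to the group Z^1(T, Z(D_e)^×) of 1-cocycles, where t ∈ T acts on Z(D_e)^× by z^t = X_t^{-1} z X_t. The isomorphism sends a cocycle ν to the automorphism ψ_0 given by ψ_0(X_t d) = X_t ν(t) d for d ∈ D_e. -/

import Mathlib

variable {G : Type*} [CommGroup G] [DecidableEq G] {D : Type*} [Ring D] [Algebra ℝ D]

/-- A real graded division algebra: the grading is an internal direct sum,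
multiplicative, and all nonzero homogeneous elements are invertible. -/
def IsGDA (comp : G → Submodule ℝ D) : Prop :=
  DirectSum.IsInternal comp ∧ (1 : D) ∈ comp 1 ∧
    (∀ (g h : G) (a b : D), a ∈ comp g → b ∈ comp h → a * b ∈ comp (g * h)) ∧
    ∀ (g : G) (a : D), a ∈ comp g → a ≠ 0 → IsUnit a

/-- Automorphisms of the graded algebra `D` that act as the identity on `D_e`. -/
def GrAutFixe (comp : G → Submodule ℝ D) (ψ : D ≃ₐ[ℝ] D) : Prop :=
  (∀ (g : G), ∀ x ∈ comp g, ψ x ∈ comp g) ∧ ∀ x ∈ comp (1 : G), ψ x = x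

/-- 1-cocycles `ν : T → Z(D_e)ˣ`, where `t ∈ T` acts on `Z(D_e)ˣ` by
`z ↦ X_t⁻¹ z X_t`, so the cocycle condition reads `ν(st) = (X_t⁻¹ ν(s) X_t) ν(t)`. -/
def IsCocycleZ1 (comp : G → Submodule ℝ D) (T : Subgroup G) (X : ↥T → Dˣ)
    (ν : ↥T → Dˣ) : Prop :=
  (∀ t : ↥T, ((ν t : D) ∈ comp (1 : G)) ∧
      ∀ z ∈ comp (1 : G), (ν t : D) * z = z * (ν t : D)) ∧
    ∀ s t : ↥T, ν (s * t) = (X t)⁻¹ * ν s * X t * ν t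

open scoped DirectSum

namespace GDAaux

variable {comp : G → Submodule ℝ D}

lemma induction (hgda : IsGDA comp) {C : D → Prop} (h0 : C 0)
    (hadd : ∀ x y, C x → C y → C (x + y))
    (hhom : ∀ g : G, ∀ x ∈ comp g, C x) : ∀ x, C x := by
  intro x
  have hx : x ∈ ⨆ g, comp g := by rw [hgda.1.submodule_iSup_eq_top]; trivial
  exact Submodule.iSup_induction (motive := C) comp hx hhom h0 hadd

lemma mul_mem1 (hgda : IsGDA comp) {g : G} {a x : D} (ha : a ∈ comp 1) (hx : x ∈ comp g) :
    a * x ∈ comp g := by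
  have := hgda.2.2.1 1 g a x ha hx; rwa [one_mul] at this

lemma inv_mem (hgda : IsGDA comp) (u : Dˣ) (g : G) (hu : (u : D) ∈ comp g) :
    ((u⁻¹ : Dˣ) : D) ∈ comp g⁻¹ := by
  classical
  set e := LinearEquiv.ofBijective (DirectSum.coeLinearMap comp) hgda.1 with he
  set y := e.symm ((u⁻¹ : Dˣ) : D) with hy
  let f : ∀ h : G, ↥(comp h) →ₗ[ℝ] ↥(comp (g * h)) := fun h =>
    { toFun := fun x => ⟨(u : D) * x, hgda.2.2.1 g h _ _ hu x.2⟩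
      map_add' := by intros; ext; simp [mul_add]
      map_smul' := by intros; ext; simp [mul_smul_comm] }
  let Φ : (⨁ (h : G), ↥(comp h)) →ₗ[ℝ] (⨁ (h : G), ↥(comp h)) :=
    DirectSum.toModule ℝ G _ (fun h => (DirectSum.lof ℝ G (fun k => ↥(comp k)) (g * h)).comp (f h))
  have ecoe : ∀ z, e z = DirectSum.coeLinearMap comp z := fun z => rfl
  have key : ∀ z : ⨁ (h : G), ↥(comp h), e (Φ z) = (u : D) * e z := by
    intro z
    induction z using DirectSum.induction_on with
    | zero => simp [map_zero]
    | of h x =>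
      rw [ecoe, ecoe, ← DirectSum.lof_eq_of ℝ]
      erw [DirectSum.toModule_lof]
      simp [DirectSum.lof_eq_of, DirectSum.coeLinearMap_of, f]
    | add x y hx hy => simp only [map_add, hx, hy, mul_add]
  have keycomp : ∀ (z : ⨁ (h : G), ↥(comp h)) (h : G), ((Φ z) (g * h) : D) = (u : D) * (z h : D) := by
    intro z h
    induction z using DirectSum.induction_on with
    | zero => simp
    | of j x =>
      rcases eq_or_ne j h with rfl | hne
      · rw [← DirectSum.lof_eq_of ℝ]
        erw [DirectSum.toModule_lof]
        simp [DirectSum.lof_eq_of, DirectSum.of_eq_same, f]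
      · rw [← DirectSum.lof_eq_of ℝ]
        erw [DirectSum.toModule_lof]
        simp only [LinearMap.comp_apply, DirectSum.lof_eq_of]
        rw [DirectSum.of_eq_of_ne _ _ _ (show g * h ≠ g * j from
            fun hc => hne (mul_left_cancel hc).symm)]
        simp [DirectSum.of_eq_of_ne _ _ _ hne.symm]
    | add z w hz hw =>
      simp only [map_add, DirectSum.add_apply, Submodule.coe_add, hz, hw, mul_add]
  have h1 : Φ y = DirectSum.of (fun k => ↥(comp k)) 1 ⟨1, hgda.2.1⟩ := by
    apply e.injective
    rw [key, hy, e.apply_symm_apply, Units.mul_inv, ecoe, DirectSum.coeLinearMap_of]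
  have h2 : ((Φ y) (g * g⁻¹) : D) = (u : D) * (y g⁻¹ : D) := keycomp y g⁻¹
  rw [h1] at h2
  have h3 : ((DirectSum.of (fun k => ↥(comp k)) 1 ⟨1, hgda.2.1⟩) (g * g⁻¹) : D) = 1 := by
    rw [mul_inv_cancel]
    rw [DirectSum.of_eq_same]
  rw [h3] at h2
  have h4 : ((u⁻¹ : Dˣ) : D) = (y g⁻¹ : D) := by
    calc ((u⁻¹ : Dˣ) : D) = ↑u⁻¹ * ((u : D) * (y g⁻¹ : D)) := by rw [← h2]; rw [mul_one]
    _ = (y g⁻¹ : D) := by rw [← mul_assoc, Units.inv_mul, one_mul]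
  rw [h4]; exact (y g⁻¹).2

lemma conj_mem1 (hgda : IsGDA comp) {t : G} (x : Dˣ) (hx : (x : D) ∈ comp t)
    {z : D} (hz : z ∈ comp 1) : (x : D) * z * ((x⁻¹ : Dˣ) : D) ∈ comp 1 := by
  have h1 : ((x⁻¹ : Dˣ) : D) ∈ comp t⁻¹ := inv_mem hgda x t hx
  have h2 : (x : D) * z ∈ comp t := by
    have := hgda.2.2.1 t 1 _ _ hx hz; rwa [mul_one] at this
  have := hgda.2.2.1 t t⁻¹ _ _ h2 h1
  rwa [mul_inv_cancel] at this


/-- Left multiplication by `u h` on the component `comp h`. -/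
noncomputable def mulmap (hgda : IsGDA comp) (u : G → Dˣ) (hu : ∀ h, (u h : D) ∈ comp 1)
    (h : G) : ↥(comp h) →ₗ[ℝ] ↥(comp h) where
  toFun := fun x => ⟨(u h : D) * x, mul_mem1 hgda (hu h) x.2⟩
  map_add' := by intros; ext; simp [mul_add]
  map_smul' := by intros; ext; simp [mul_smul_comm]

/-- The linear map `x ↦ u g * x` on each component `comp g`. -/
noncomputable def L (hgda : IsGDA comp) (u : G → Dˣ) (hu : ∀ h, (u h : D) ∈ comp 1) :
    D →ₗ[ℝ] D :=
  (DirectSum.coeLinearMap comp).comp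
    ((DirectSum.toModule ℝ G _ (fun h => (DirectSum.lof ℝ G (fun k => ↥(comp k)) h).comp
      (mulmap hgda u hu h))).comp
      (LinearEquiv.ofBijective (DirectSum.coeLinearMap comp) hgda.1).symm.toLinearMap)

lemma L_apply (hgda : IsGDA comp) (u : G → Dˣ) (hu : ∀ h, (u h : D) ∈ comp 1)
    (g : G) (x : D) (hx : x ∈ comp g) : L hgda u hu x = (u g : D) * x := by
  set e := LinearEquiv.ofBijective (DirectSum.coeLinearMap comp) hgda.1 with he
  have h1 : e.symm x = DirectSum.lof ℝ G (fun k => ↥(comp k)) g ⟨x, hx⟩ := by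
    apply e.injective
    rw [e.apply_symm_apply, he]
    show x = DirectSum.coeLinearMap comp (DirectSum.lof ℝ G (fun k => ↥(comp k)) g ⟨x, hx⟩)
    rw [DirectSum.lof_eq_of,
      DirectSum.coeLinearMap_of]
  rw [L, LinearMap.comp_apply, LinearMap.comp_apply]
  erw [h1]
  erw [DirectSum.toModule_lof]
  simp only [LinearMap.comp_apply, mulmap, LinearMap.coe_mk, AddHom.coe_mk,
    DirectSum.lof_eq_of]
  rw [DirectSum.coeLinearMap_of]

lemma central_conj (hgda : IsGDA comp) {t : G} (Xt : Dˣ) (hXt : (Xt : D) ∈ comp t) (νs : Dˣ)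
    (hc : ∀ z ∈ comp 1, (νs : D) * z = z * (νs : D)) :
    ∀ z ∈ comp 1, (((Xt⁻¹ : Dˣ) : D) * νs * Xt) * z = z * (((Xt⁻¹ : Dˣ) : D) * νs * Xt) := by
  intro z hz
  have hz' : (Xt : D) * z * ((Xt⁻¹ : Dˣ) : D) ∈ comp 1 := conj_mem1 hgda Xt hXt hz
  have e1 : (νs : D) * ((Xt : D) * z * ((Xt⁻¹ : Dˣ) : D)) =
      ((Xt : D) * z * ((Xt⁻¹ : Dˣ) : D)) * (νs : D) := hc _ hz'
  calc ((Xt⁻¹ : Dˣ) : D) * νs * Xt * z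
      = ((Xt⁻¹ : Dˣ) : D) * ((νs : D) * ((Xt : D) * z * ((Xt⁻¹ : Dˣ) : D))) * Xt := by
        simp [mul_assoc]
    _ = ((Xt⁻¹ : Dˣ) : D) * (((Xt : D) * z * ((Xt⁻¹ : Dˣ) : D)) * (νs : D)) * Xt := by rw [e1]
    _ = z * (((Xt⁻¹ : Dˣ) : D) * νs * Xt) := by simp [mul_assoc]

lemma cocycle_core (hgda : IsGDA comp) {s t st : G} (Xs Xt Xst : Dˣ)
    (hXs : (Xs : D) ∈ comp s) (hXt : (Xt : D) ∈ comp t) (hXst : (Xst : D) ∈ comp st)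
    (hst : st = s * t) (νs νt : Dˣ) (hνs1 : (νs : D) ∈ comp 1)
    (hνscent : ∀ z ∈ comp 1, (νs : D) * z = z * (νs : D))
    (hνtcent : ∀ z ∈ comp 1, (νt : D) * z = z * (νt : D)) :
    Xst * (Xt⁻¹ * νs * Xt * νt) * (Xst⁻¹ * Xs * Xt) = Xs * νs * (Xt * νt) := by
  have hcmem : ((Xst⁻¹ * Xs * Xt : Dˣ) : D) ∈ comp 1 := by
    have h1 : ((Xst⁻¹ : Dˣ) : D) ∈ comp st⁻¹ := inv_mem hgda Xst st hXst
    have h2 := hgda.2.2.1 _ _ _ _ (hgda.2.2.1 _ _ _ _ h1 hXs) hXt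
    rw [show st⁻¹ * s * t = 1 by rw [hst]; group] at h2
    simpa [mul_assoc] using h2
  have hwmem : ((Xt⁻¹ * νs * Xt : Dˣ) : D) ∈ comp 1 := by
    have h1 : ((Xt⁻¹ : Dˣ) : D) ∈ comp t⁻¹ := inv_mem hgda Xt t hXt
    have h2 := hgda.2.2.1 _ _ _ _ (hgda.2.2.1 _ _ _ _ h1 hνs1) hXt
    rw [show t⁻¹ * 1 * t = 1 by group] at h2
    simpa [mul_assoc] using h2
  have hc1 : Commute νt (Xst⁻¹ * Xs * Xt) := by
    apply Units.ext
    simpa [Units.val_mul] using hνtcent _ hcmem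
  have hc2 : Commute (Xt⁻¹ * νs * Xt) (Xst⁻¹ * Xs * Xt) := by
    apply Units.ext
    have := central_conj hgda Xt hXt νs hνscent _ hcmem
    simpa [Units.val_mul, mul_assoc] using this
  calc Xst * (Xt⁻¹ * νs * Xt * νt) * (Xst⁻¹ * Xs * Xt)
      = Xst * (Xt⁻¹ * νs * Xt) * (νt * (Xst⁻¹ * Xs * Xt)) := by group
    _ = Xst * (Xt⁻¹ * νs * Xt) * ((Xst⁻¹ * Xs * Xt) * νt) := by rw [hc1.eq]
    _ = Xst * ((Xt⁻¹ * νs * Xt) * (Xst⁻¹ * Xs * Xt)) * νt := by group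
    _ = Xst * ((Xst⁻¹ * Xs * Xt) * (Xt⁻¹ * νs * Xt)) * νt := by rw [hc2.eq]
    _ = Xs * νs * (Xt * νt) := by group


lemma elem_key (hgda : IsGDA comp) {τ : G} (Us Ut Ust Xs Xt νt : Dˣ)
    (hXt : (Xt : D) ∈ comp τ)
    (k0 : Ut * Xt = Xt * νt)
    (k1 : Ust * Xs * Xt = Us * Xs * Xt * νt)
    (k2 : ∀ z ∈ comp 1, (νt : D) * z = z * (νt : D))
    {a b : D} (ha : a ∈ comp 1) (hb : b ∈ comp 1) :
    (Ust : D) * (((Xs : D) * a) * ((Xt : D) * b)) =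
      ((Us : D) * ((Xs : D) * a)) * ((Ut : D) * ((Xt : D) * b)) := by
  set a' : D := ((Xt⁻¹ : Dˣ) : D) * a * (Xt : D) with ha'def
  have ha' : a' ∈ comp 1 := by
    have := conj_mem1 hgda Xt⁻¹ (inv_mem hgda Xt τ hXt) ha
    simpa using this
  have f1' : ∀ c : D, a * ((Xt : D) * c) = (Xt : D) * (a' * c) := by
    intro c
    rw [ha'def]
    calc a * ((Xt : D) * c) = (Xt : D) * (((Xt⁻¹ : Dˣ) : D) * (a * ((Xt : D) * c))) := by
          rw [Units.mul_inv_cancel_left]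
      _ = (Xt : D) * (((Xt⁻¹ : Dˣ) : D) * a * (Xt : D) * c) := by simp [mul_assoc]
  have k2' : ∀ c : D, a' * ((νt : D) * c) = (νt : D) * (a' * c) := by
    intro c
    rw [← mul_assoc, ← k2 a' ha', mul_assoc]
  have k0' : ∀ c : D, (Ut : D) * ((Xt : D) * c) = (Xt : D) * ((νt : D) * c) := by
    intro c
    calc (Ut : D) * ((Xt : D) * c) = ((Ut * Xt : Dˣ) : D) * c := by
          simp [Units.val_mul, mul_assoc]
      _ = ((Xt * νt : Dˣ) : D) * c := by rw [k0]
      _ = _ := by simp [Units.val_mul, mul_assoc]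
  have k1' : ∀ c : D, (Ust : D) * ((Xs : D) * ((Xt : D) * c)) =
      (Us : D) * ((Xs : D) * ((Xt : D) * ((νt : D) * c))) := by
    intro c
    calc (Ust : D) * ((Xs : D) * ((Xt : D) * c)) = ((Ust * Xs * Xt : Dˣ) : D) * c := by
          simp [Units.val_mul, mul_assoc]
      _ = ((Us * Xs * Xt * νt : Dˣ) : D) * c := by rw [k1]
      _ = _ := by simp [Units.val_mul, mul_assoc]
  simp only [mul_assoc]
  rw [k0' b]
  simp only [f1']
  simp only [k2']
  simpa [mul_assoc] using k1' (a' * b)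

end GDAaux

/-- The group of automorphisms of the graded algebra `D` acting trivially on `D_e`
is isomorphic to `Z¹(T, Z(D_e)ˣ)`: the correspondence `ψ₀ ↦ ν`, determined by
`ψ₀(X_t d) = X_t ν(t) d` for `d ∈ D_e`, is a bijection onto the group of cocycles
turning composition into pointwise product. -/
theorem stmt_2 (comp : G → Submodule ℝ D) (hgda : IsGDA comp)
    (T : Subgroup G) (hT : ∀ g : G, comp g ≠ ⊥ ↔ g ∈ T)
    (X : ↥T → Dˣ) (hX : ∀ t : ↥T, (X t : D) ∈ comp (t : G)) :
    ∃ F : (D ≃ₐ[ℝ] D) → (↥T → Dˣ),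
      (∀ ψ, GrAutFixe comp ψ → IsCocycleZ1 comp T X (F ψ) ∧
        ∀ (t : ↥T), ∀ d ∈ comp (1 : G), ψ ((X t : D) * d) = (X t : D) * (F ψ t : D) * d) ∧
      (∀ ψ₁ ψ₂, GrAutFixe comp ψ₁ → GrAutFixe comp ψ₂ → F ψ₁ = F ψ₂ → ψ₁ = ψ₂) ∧
      (∀ ν : ↥T → Dˣ, IsCocycleZ1 comp T X ν →
        ∃ ψ, GrAutFixe comp ψ ∧ F ψ = ν) ∧
      (∀ ψ₁ ψ₂, GrAutFixe comp ψ₁ → GrAutFixe comp ψ₂ →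
        ∀ t : ↥T, F (ψ₂.trans ψ₁) t = F ψ₁ t * F ψ₂ t) := by
  classical
  set F : (D ≃ₐ[ℝ] D) → (↥T → Dˣ) :=
    fun ψ t => (X t)⁻¹ * Units.map (ψ : D →* D) (X t) with hF
  have Fcoe : ∀ (ψ : D ≃ₐ[ℝ] D) (t : ↥T),
      ((F ψ t : Dˣ) : D) = (((X t)⁻¹ : Dˣ) : D) * ψ ((X t : Dˣ) : D) := by
    intro ψ t; simp [hF, Units.val_mul]
  have Xinvmem : ∀ t : ↥T, (((X t)⁻¹ : Dˣ) : D) ∈ comp ((t : G))⁻¹ :=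
    fun t => GDAaux.inv_mem hgda (X t) _ (hX t)
  have spec : ∀ ψ, GrAutFixe comp ψ → ∀ t : ↥T, ∀ d ∈ comp (1 : G),
      ψ ((X t : D) * d) = (X t : D) * (F ψ t : D) * d := by
    intro ψ hψ t d hd
    rw [map_mul, hψ.2 d hd, Fcoe, ← mul_assoc, Units.mul_inv, one_mul]
  have Fmem : ∀ ψ, GrAutFixe comp ψ → ∀ t : ↥T, ((F ψ t : Dˣ) : D) ∈ comp (1 : G) := by
    intro ψ hψ t
    rw [Fcoe]
    have h2 := hgda.2.2.1 _ _ _ _ (Xinvmem t) (hψ.1 _ _ (hX t))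
    rwa [inv_mul_cancel] at h2
  have Fcent : ∀ ψ, GrAutFixe comp ψ → ∀ t : ↥T, ∀ z ∈ comp (1 : G),
      ((F ψ t : Dˣ) : D) * z = z * ((F ψ t : Dˣ) : D) := by
    intro ψ hψ t z hz
    have hz' : ((X t : Dˣ) : D) * z * (((X t)⁻¹ : Dˣ) : D) ∈ comp 1 :=
      GDAaux.conj_mem1 hgda (X t) (hX t) hz
    have e1 : ψ (((X t : Dˣ) : D) * z) = ψ ((X t : Dˣ) : D) * z := by
      rw [map_mul, hψ.2 z hz]
    have e2 : ψ (((X t : Dˣ) : D) * z) =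
        ((X t : Dˣ) : D) * z * (((X t)⁻¹ : Dˣ) : D) * ψ ((X t : Dˣ) : D) := by
      conv_lhs => rw [show ((X t : Dˣ) : D) * z =
        (((X t : Dˣ) : D) * z * (((X t)⁻¹ : Dˣ) : D)) * ((X t : Dˣ) : D) by
          rw [mul_assoc, Units.inv_mul, mul_one]]
      rw [map_mul, hψ.2 _ hz']
    rw [Fcoe]
    calc (((X t)⁻¹ : Dˣ) : D) * ψ ((X t : Dˣ) : D) * z
        = (((X t)⁻¹ : Dˣ) : D) * (ψ ((X t : Dˣ) : D) * z) := by rw [mul_assoc]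
      _ = (((X t)⁻¹ : Dˣ) : D) *
          (((X t : Dˣ) : D) * z * (((X t)⁻¹ : Dˣ) : D) * ψ ((X t : Dˣ) : D)) := by
          rw [← e1, e2]
      _ = z * ((((X t)⁻¹ : Dˣ) : D) * ψ ((X t : Dˣ) : D)) := by
          simp [mul_assoc]
  have XmulF : ∀ (ψ : D ≃ₐ[ℝ] D) (t : ↥T),
      X t * F ψ t = Units.map (ψ : D →* D) (X t) := by
    intro ψ t; rw [hF]; simp
  have Fcocycle : ∀ ψ, GrAutFixe comp ψ → ∀ s t : ↥T,
      F ψ (s * t) = (X t)⁻¹ * F ψ s * X t * F ψ t := by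
    intro ψ hψ s t
    set m := Units.map (ψ : D →* D) with hm
    have hcmem : (((X (s*t))⁻¹ * X s * X t : Dˣ) : D) ∈ comp 1 := by
      have h2 := hgda.2.2.1 _ _ _ _ (hgda.2.2.1 _ _ _ _ (Xinvmem (s*t)) (hX s)) (hX t)
      rw [show ((((s*t) : ↥T) : G))⁻¹ * (s : G) * (t : G) = 1 by
        rw [show (((s*t) : ↥T) : G) = (s : G) * (t : G) from rfl]; group] at h2
      simpa [Units.val_mul, mul_assoc] using h2
    have hmc : m ((X (s*t))⁻¹ * X s * X t) = (X (s*t))⁻¹ * X s * X t := by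
      apply Units.ext
      rw [Units.coe_map]
      exact hψ.2 _ hcmem
    have key : m (X s) * m (X t) = m (X (s*t)) * ((X (s*t))⁻¹ * X s * X t) := by
      rw [← map_mul, ← hmc, ← map_mul]
      congr 1
      group
    rw [← XmulF ψ s, ← XmulF ψ t, ← XmulF ψ (s*t)] at key
    have core := GDAaux.cocycle_core hgda (X s) (X t) (X (s*t)) (hX s) (hX t) (hX (s*t))
      rfl (F ψ s) (F ψ t) (Fmem ψ hψ s) (Fcent ψ hψ s) (Fcent ψ hψ t)
    exact (mul_left_cancel (mul_right_cancel (core.trans key))).symm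
  refine ⟨F, ?_, ?_, ?_, ?_⟩
  · -- part 1
    intro ψ hψ
    exact ⟨⟨fun t => ⟨Fmem ψ hψ t, Fcent ψ hψ t⟩, Fcocycle ψ hψ⟩, spec ψ hψ⟩
  · -- part 2 : injectivity
    intro ψ₁ ψ₂ h1 h2 heq
    apply AlgEquiv.ext
    refine GDAaux.induction hgda (by simp) (fun x y hx hy => by simp [map_add, hx, hy]) ?_
    intro g x hx
    by_cases hx0 : x = 0
    · simp [hx0]
    have hgT : g ∈ T := (hT g).1 (by
      intro hb; rw [hb] at hx; exact hx0 ((Submodule.mem_bot ℝ).mp hx))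
    set t : ↥T := ⟨g, hgT⟩ with ht
    have hd : (((X t)⁻¹ : Dˣ) : D) * x ∈ comp (1 : G) := by
      have := hgda.2.2.1 _ _ _ _ (Xinvmem t) hx
      rwa [show ((t : G))⁻¹ * g = 1 by rw [show (t : G) = g from rfl]; group] at this
    have hx' : x = ((X t : Dˣ) : D) * ((((X t)⁻¹ : Dˣ) : D) * x) :=
      (Units.mul_inv_cancel_left _ _).symm
    rw [hx', spec ψ₁ h1 t _ hd, spec ψ₂ h2 t _ hd, heq]
  · -- part 3 : surjectivity
    intro ν hν
    set U : G → Dˣ := fun g => if h : g ∈ T then X ⟨g, h⟩ * ν ⟨g, h⟩ * (X ⟨g, h⟩)⁻¹ else 1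
      with hUdef
    have UX : ∀ r : ↥T, U (r : G) = X r * ν r * (X r)⁻¹ := by
      intro r; simp only [hUdef, dif_pos r.2, Subtype.coe_eta]
    have hU : ∀ h, ((U h : Dˣ) : D) ∈ comp 1 := by
      intro h
      by_cases hh : h ∈ T
      · rw [show h = ((⟨h, hh⟩ : ↥T) : G) from rfl, UX]
        simpa [Units.val_mul] using
          GDAaux.conj_mem1 hgda (X ⟨h, hh⟩) (hX _) (hν.1 ⟨h, hh⟩).1
      · simp [hUdef, dif_neg hh, hgda.2.1]
    have hU' : ∀ h, (((U h)⁻¹ : Dˣ) : D) ∈ comp 1 := by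
      intro h
      have := GDAaux.inv_mem hgda (U h) 1 (hU h); rwa [inv_one] at this
    have ν1 : ν 1 = 1 := by
      have hX1 : ((X 1 : Dˣ) : D) ∈ comp (1 : G) := by
        have := hX 1; rwa [show ((1 : ↥T) : G) = 1 from rfl] at this
      have hcu : Commute (ν 1) (X 1) :=
        Units.ext (by simpa [Units.val_mul] using (hν.1 1).2 _ hX1)
      have h2 := hν.2 1 1
      rw [mul_one] at h2
      have h3 : (X 1)⁻¹ * ν 1 * X 1 = ν 1 := by
        rw [mul_assoc, hcu.eq, inv_mul_cancel_left]
      rw [h3] at h2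
      have h4 : ν 1 * 1 = ν 1 * ν 1 := by rw [mul_one, ← h2]
      exact (mul_left_cancel h4).symm
    have U1 : U 1 = 1 := by
      rw [show (1 : G) = ((1 : ↥T) : G) from rfl, UX, ν1, mul_one, mul_inv_cancel]
    set Lν := GDAaux.L hgda U hU with hLν
    set Lν' := GDAaux.L hgda (fun g => (U g)⁻¹) hU' with hLν'
    have LL : ∀ x, Lν (Lν' x) = x := by
      refine GDAaux.induction hgda (by simp) (fun x y hx hy => by simp [map_add, hx, hy]) ?_
      intro g x hx
      have hmem : (((U g)⁻¹ : Dˣ) : D) * x ∈ comp g := GDAaux.mul_mem1 hgda (hU' g) hx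
      rw [hLν', GDAaux.L_apply hgda _ hU' g x hx, hLν,
        GDAaux.L_apply hgda U hU g _ hmem, Units.mul_inv_cancel_left]
    have LL' : ∀ x, Lν' (Lν x) = x := by
      refine GDAaux.induction hgda (by simp) (fun x y hx hy => by simp [map_add, hx, hy]) ?_
      intro g x hx
      have hmem : ((U g : Dˣ) : D) * x ∈ comp g := GDAaux.mul_mem1 hgda (hU g) hx
      rw [hLν, GDAaux.L_apply hgda U hU g x hx, hLν',
        GDAaux.L_apply hgda _ hU' g _ hmem, Units.inv_mul_cancel_left]
    set Lequiv : D ≃ₗ[ℝ] D := LinearEquiv.ofLinear Lν Lν'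
      (LinearMap.ext LL) (LinearMap.ext LL') with hLeq
    have hLe : ∀ x, Lequiv x = Lν x := fun _ => rfl
    have hone : Lequiv (1 : D) = 1 := by
      rw [hLe, hLν, GDAaux.L_apply hgda U hU 1 1 hgda.2.1, U1]; simp
    have hmulν : ∀ x y : D, Lν (x * y) = Lν x * Lν y := by
      refine GDAaux.induction hgda (C := fun x => ∀ y, Lν (x * y) = Lν x * Lν y)
        (fun y => by simp) (fun x₁ x₂ hx₁ hx₂ y => by
          simp only [add_mul, map_add, hx₁ y, hx₂ y]) ?_
      intro gx x hx
      refine GDAaux.induction hgda (C := fun y => Lν (x * y) = Lν x * Lν y)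
        (by simp) (fun y₁ y₂ hy₁ hy₂ => by simp only [mul_add, map_add, hy₁, hy₂]) ?_
      intro gy y hy
      by_cases hx0 : x = 0
      · simp [hx0]
      by_cases hy0 : y = 0
      · simp [hy0]
      have hgs : gx ∈ T := (hT gx).1 (fun hb => hx0 (by
        rw [hb] at hx; exact (Submodule.mem_bot ℝ).mp hx))
      have hgt : gy ∈ T := (hT gy).1 (fun hb => hy0 (by
        rw [hb] at hy; exact (Submodule.mem_bot ℝ).mp hy))
      set s : ↥T := ⟨gx, hgs⟩ with hs
      set t : ↥T := ⟨gy, hgt⟩ with htdef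
      obtain ⟨a, ha, rfl⟩ : ∃ a, a ∈ comp (1 : G) ∧ x = ((X s : Dˣ) : D) * a := by
        refine ⟨(((X s)⁻¹ : Dˣ) : D) * x, ?_, (Units.mul_inv_cancel_left _ _).symm⟩
        have := hgda.2.2.1 _ _ _ _ (Xinvmem s) hx
        rwa [show ((s : G))⁻¹ * gx = 1 by rw [show (s : G) = gx from rfl]; group] at this
      obtain ⟨b, hb, rfl⟩ : ∃ b, b ∈ comp (1 : G) ∧ y = ((X t : Dˣ) : D) * b := by
        refine ⟨(((X t)⁻¹ : Dˣ) : D) * y, ?_, (Units.mul_inv_cancel_left _ _).symm⟩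
        have := hgda.2.2.1 _ _ _ _ (Xinvmem t) hy
        rwa [show ((t : G))⁻¹ * gy = 1 by rw [show (t : G) = gy from rfl]; group] at this
      have hxy : (((X s : Dˣ) : D) * a) * (((X t : Dˣ) : D) * b) ∈ comp (gx * gy) :=
        hgda.2.2.1 _ _ _ _ hx hy
      rw [hLν, GDAaux.L_apply hgda U hU _ _ hxy, GDAaux.L_apply hgda U hU _ _ hx,
        GDAaux.L_apply hgda U hU _ _ hy]
      have k0 : U gy * X t = X t * ν t := by
        rw [show U gy = X t * ν t * (X t)⁻¹ from UX t]
        group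
      have k1 : U (gx * gy) * X s * X t = U gx * X s * X t * ν t := by
        have hUst : U (gx * gy) = X (s * t) * ν (s * t) * (X (s * t))⁻¹ := UX (s * t)
        rw [hUst, show U gx = X s * ν s * (X s)⁻¹ from UX s, hν.2 s t]
        have core := GDAaux.cocycle_core hgda (X s) (X t) (X (s * t)) (hX s) (hX t)
          (hX (s * t)) rfl (ν s) (ν t) (hν.1 s).1 (hν.1 s).2 (hν.1 t).2
        calc X (s * t) * ((X t)⁻¹ * ν s * X t * ν t) * (X (s * t))⁻¹ * X s * X t
            = X (s * t) * ((X t)⁻¹ * ν s * X t * ν t) * ((X (s * t))⁻¹ * X s * X t) := by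
              group
          _ = X s * ν s * (X t * ν t) := core
          _ = X s * ν s * (X s)⁻¹ * X s * (X t * ν t) := by group
          _ = X s * ν s * (X s)⁻¹ * X s * X t * ν t := by group
      exact GDAaux.elem_key hgda (U gx) (U gy) (U (gx * gy)) (X s) (X t) (ν t) (hX t)
        k0 k1 (hν.1 t).2 ha hb
    have hmul : ∀ x y : D, Lequiv (x * y) = Lequiv x * Lequiv y := fun x y => hmulν x y
    set ψ : D ≃ₐ[ℝ] D := AlgEquiv.ofLinearEquiv Lequiv hone hmul with hψdef
    have hψapp : ∀ x, ψ x = Lν x := fun x => rfl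
    have hGr : GrAutFixe comp ψ := by
      constructor
      · intro g x hx
        rw [hψapp, hLν, GDAaux.L_apply hgda U hU g x hx]
        exact GDAaux.mul_mem1 hgda (hU g) hx
      · intro x hx
        rw [hψapp, hLν, GDAaux.L_apply hgda U hU 1 x hx, U1]
        simp
    refine ⟨ψ, hGr, ?_⟩
    funext t
    apply Units.ext
    have happ : ψ ((X t : Dˣ) : D) = ((U (t : G) : Dˣ) : D) * ((X t : Dˣ) : D) := by
      rw [hψapp, hLν, GDAaux.L_apply hgda U hU _ _ (hX t)]
    rw [Fcoe, happ, UX t]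
    simp [Units.val_mul, mul_assoc]
  · -- part 4 : group homomorphism
    intro ψ₁ ψ₂ h1 h2 t
    apply Units.ext
    have hψ2 : ψ₂ ((X t : Dˣ) : D) = ((X t : Dˣ) : D) * ((F ψ₂ t : Dˣ) : D) := by
      rw [Fcoe, Units.mul_inv_cancel_left]
    rw [Fcoe (ψ₂.trans ψ₁) t, AlgEquiv.trans_apply, hψ2, map_mul,
      h1.2 _ (Fmem ψ₂ h2 t)]
    conv_rhs => rw [Units.val_mul, Fcoe ψ₁ t]
    rw [mul_assoc]
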